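/- Let f be a three times continuously differentiable probability density on ℝ with compact support [a,b], positive on (a,b), whose critical points in (a,b) are finitely many and all nondegenerate; denote its local minima in (a,b) by m_1, …, m_{r−1} and its local maxima in (a,b) by M_1, …, M_r. Let K ⊂ (a,b) be a compact set containing all these critical points in its interior, and let (g_n) be twice continuously differentiable functions on ℝ with g_n' → f' and g_n'' → f'' uniformly. Then there exist ε > 0 and n_0 ∈ ℕ such that for every n ≥ n_0: (i) for each j, g_n'' > 0 on [m_j − ε, m_j + ε] and g_n has exactly one critical point in [m_j − ε, m_j + ε], which is a local minimum; (ii) for each k, g_n'' < 0 on [M_k − ε, M_k + ε] and g_n has exactly one critical point in [M_k − ε, M_k + ε], which is a local maximum; and (iii) g_n has no critical points in K outside the union of these intervals. -/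
import Mathlib


open MeasureTheory Filter Set

section AuxLemmas

private lemma aux_isLocalMin_of_strictMonoOn {h : ℝ → ℝ} (hd : Differentiable ℝ h)
    {u v x : ℝ} (hx : x ∈ Set.Ioo u v) (mono : StrictMonoOn (deriv h) (Set.Icc u v))
    (hx0 : deriv h x = 0) : IsLocalMin h x := by
  have hxI : x ∈ Set.Icc u v := Set.mem_Icc_of_Ioo hx
  have anti : AntitoneOn h (Set.Icc u x) := by
    apply antitoneOn_of_deriv_nonpos (convex_Icc u x) hd.continuous.continuousOn
      (hd.differentiableOn)
    intro y hy
    rw [interior_Icc] at hy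
    have h1 : y ∈ Set.Icc u v := ⟨hy.1.le, hy.2.le.trans hx.2.le⟩
    have := mono h1 hxI hy.2
    linarith [hx0 ▸ this]
  have monoh : MonotoneOn h (Set.Icc x v) := by
    apply monotoneOn_of_deriv_nonneg (convex_Icc x v) hd.continuous.continuousOn
      (hd.differentiableOn)
    intro y hy
    rw [interior_Icc] at hy
    have h1 : y ∈ Set.Icc u v := ⟨hx.1.le.trans hy.1.le, hy.2.le⟩
    have := mono hxI h1 hy.1
    linarith [hx0 ▸ this]
  have hmin : IsMinOn h (Set.Icc u v) x := by
    intro y hy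
    rcases le_total y x with h1 | h1
    · exact anti ⟨hy.1, h1⟩ ⟨hx.1.le, le_refl x⟩ h1
    · exact monoh ⟨le_refl x, hx.2.le⟩ ⟨h1, hy.2⟩ h1
  exact hmin.isLocalMin (Icc_mem_nhds hx.1 hx.2)

private lemma aux_isLocalMax_of_strictAntiOn {h : ℝ → ℝ} (hd : Differentiable ℝ h)
    {u v x : ℝ} (hx : x ∈ Set.Ioo u v) (anti : StrictAntiOn (deriv h) (Set.Icc u v))
    (hx0 : deriv h x = 0) : IsLocalMax h x := by
  have hxI : x ∈ Set.Icc u v := Set.mem_Icc_of_Ioo hx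
  have monoh : MonotoneOn h (Set.Icc u x) := by
    apply monotoneOn_of_deriv_nonneg (convex_Icc u x) hd.continuous.continuousOn
      (hd.differentiableOn)
    intro y hy
    rw [interior_Icc] at hy
    have h1 : y ∈ Set.Icc u v := ⟨hy.1.le, hy.2.le.trans hx.2.le⟩
    have := anti h1 hxI hy.2
    linarith [hx0 ▸ this]
  have antih : AntitoneOn h (Set.Icc x v) := by
    apply antitoneOn_of_deriv_nonpos (convex_Icc x v) hd.continuous.continuousOn
      (hd.differentiableOn)
    intro y hy
    rw [interior_Icc] at hy
    have h1 : y ∈ Set.Icc u v := ⟨hx.1.le.trans hy.1.le, hy.2.le⟩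
    have := anti hxI h1 hy.1
    linarith [hx0 ▸ this]
  have hmax : IsMaxOn h (Set.Icc u v) x := by
    intro y hy
    rcases le_total y x with h1 | h1
    · exact monoh ⟨hy.1, h1⟩ ⟨hx.1.le, le_refl x⟩ h1
    · exact antih ⟨le_refl x, hx.2.le⟩ ⟨h1, hy.2⟩ h1
  exact hmax.isLocalMax (Icc_mem_nhds hx.1 hx.2)

/-- key interval lemma, min version -/
private lemma aux_key_min {h : ℝ → ℝ} (hd : Differentiable ℝ h) (hc' : Continuous (deriv h))
    {u v : ℝ} (huv : u < v)
    (hpos : ∀ x ∈ Set.Icc u v, 0 < deriv (deriv h) x)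
    (hu : deriv h u < 0) (hv : 0 < deriv h v) :
    ∃ x ∈ Set.Icc u v, deriv h x = 0 ∧ IsLocalMin h x ∧
      ∀ y ∈ Set.Icc u v, deriv h y = 0 → y = x := by
  have mono : StrictMonoOn (deriv h) (Set.Icc u v) :=
    strictMonoOn_of_deriv_pos (convex_Icc u v) hc'.continuousOn
      (fun x hx => hpos x (interior_subset hx))
  obtain ⟨x, hxmem, hx0⟩ := intermediate_value_Icc huv.le hc'.continuousOn ⟨hu.le, hv.le⟩
  have hxu : u < x := lt_of_le_of_ne hxmem.1 (by rintro rfl; exact hu.ne hx0)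
  have hxv : x < v := lt_of_le_of_ne hxmem.2 (by rintro rfl; exact hv.ne' hx0)
  exact ⟨x, hxmem, hx0, aux_isLocalMin_of_strictMonoOn hd ⟨hxu, hxv⟩ mono hx0,
    fun y hy hy0 => mono.injOn hy hxmem (hy0.trans hx0.symm)⟩

/-- key interval lemma, max version -/
private lemma aux_key_max {h : ℝ → ℝ} (hd : Differentiable ℝ h) (hc' : Continuous (deriv h))
    {u v : ℝ} (huv : u < v)
    (hneg : ∀ x ∈ Set.Icc u v, deriv (deriv h) x < 0)
    (hu : 0 < deriv h u) (hv : deriv h v < 0) :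
    ∃ x ∈ Set.Icc u v, deriv h x = 0 ∧ IsLocalMax h x ∧
      ∀ y ∈ Set.Icc u v, deriv h y = 0 → y = x := by
  have anti : StrictAntiOn (deriv h) (Set.Icc u v) :=
    strictAntiOn_of_deriv_neg (convex_Icc u v) hc'.continuousOn
      (fun x hx => hneg x (interior_subset hx))
  obtain ⟨x, hxmem, hx0⟩ := intermediate_value_Icc' huv.le hc'.continuousOn ⟨hv.le, hu.le⟩
  have hxu : u < x := lt_of_le_of_ne hxmem.1 (by rintro rfl; exact hu.ne' hx0)
  have hxv : x < v := lt_of_le_of_ne hxmem.2 (by rintro rfl; exact hv.ne hx0)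
  exact ⟨x, hxmem, hx0, aux_isLocalMax_of_strictAntiOn hd ⟨hxu, hxv⟩ anti hx0,
    fun y hy hy0 => anti.injOn hy hxmem (hy0.trans hx0.symm)⟩

/-- second-derivative test, min -/
private lemma aux_isLocalMin_of_deriv2_pos {h : ℝ → ℝ} (hd : Differentiable ℝ h)
    (hc' : Continuous (deriv h)) (hc'' : Continuous (deriv (deriv h)))
    {x : ℝ} (h0 : deriv h x = 0) (h2 : 0 < deriv (deriv h) x) : IsLocalMin h x := by
  have hU : IsOpen ((deriv (deriv h)) ⁻¹' Set.Ioi 0) := isOpen_Ioi.preimage hc''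
  obtain ⟨ρ, ρpos, hball⟩ := Metric.isOpen_iff.1 hU x h2
  have mono : StrictMonoOn (deriv h) (Set.Icc (x - ρ/2) (x + ρ/2)) := by
    apply strictMonoOn_of_deriv_pos (convex_Icc _ _) hc'.continuousOn
    intro y hy
    rw [interior_Icc] at hy
    apply hball
    rw [Metric.mem_ball, Real.dist_eq, abs_sub_lt_iff]
    constructor <;> [nlinarith [hy.1, hy.2]; nlinarith [hy.1, hy.2]]
  exact aux_isLocalMin_of_strictMonoOn hd ⟨by linarith, by linarith⟩ mono h0

/-- second-derivative test, max -/
private lemma aux_isLocalMax_of_deriv2_neg {h : ℝ → ℝ} (hd : Differentiable ℝ h)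
    (hc' : Continuous (deriv h)) (hc'' : Continuous (deriv (deriv h)))
    {x : ℝ} (h0 : deriv h x = 0) (h2 : deriv (deriv h) x < 0) : IsLocalMax h x := by
  have hU : IsOpen ((deriv (deriv h)) ⁻¹' Set.Iio 0) := isOpen_Iio.preimage hc''
  obtain ⟨ρ, ρpos, hball⟩ := Metric.isOpen_iff.1 hU x h2
  have anti : StrictAntiOn (deriv h) (Set.Icc (x - ρ/2) (x + ρ/2)) := by
    apply strictAntiOn_of_deriv_neg (convex_Icc _ _) hc'.continuousOn
    intro y hy
    rw [interior_Icc] at hy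
    apply hball
    rw [Metric.mem_ball, Real.dist_eq, abs_sub_lt_iff]
    constructor <;> [nlinarith [hy.1, hy.2]; nlinarith [hy.1, hy.2]]
  exact aux_isLocalMax_of_strictAntiOn hd ⟨by linarith, by linarith⟩ anti h0

/-- a nondegenerate local min has positive second derivative -/
private lemma aux_not_isLocalMin_of_deriv2_neg {h : ℝ → ℝ} (hc : Continuous h)
    (hc' : Continuous (deriv h)) (hc'' : Continuous (deriv (deriv h)))
    {x : ℝ} (h0 : deriv h x = 0) (h2 : deriv (deriv h) x < 0) : ¬ IsLocalMin h x := by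
  intro hmin
  have hU : IsOpen ((deriv (deriv h)) ⁻¹' Set.Iio 0) := isOpen_Iio.preimage hc''
  obtain ⟨ρ, ρpos, hball⟩ := Metric.isOpen_iff.1 hU x h2
  have anti : StrictAntiOn (deriv h) (Set.Icc (x - ρ/2) (x + ρ/2)) := by
    apply strictAntiOn_of_deriv_neg (convex_Icc _ _) hc'.continuousOn
    intro y hy
    rw [interior_Icc] at hy
    apply hball
    rw [Metric.mem_ball, Real.dist_eq, abs_sub_lt_iff]
    constructor <;> [nlinarith [hy.1, hy.2]; nlinarith [hy.1, hy.2]]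
  -- h strictly decreasing on [x, x+ρ/2]
  have hanti : StrictAntiOn h (Set.Icc x (x + ρ/2)) := by
    apply strictAntiOn_of_deriv_neg (convex_Icc _ _) hc.continuousOn
    intro y hy
    rw [interior_Icc] at hy
    have hyI : y ∈ Set.Icc (x - ρ/2) (x + ρ/2) := ⟨by linarith [hy.1], hy.2.le⟩
    have hxI : x ∈ Set.Icc (x - ρ/2) (x + ρ/2) := ⟨by linarith, by linarith⟩
    have := anti hxI hyI hy.1
    linarith [h0 ▸ this]
  have h1 : ∀ᶠ y in nhdsWithin x (Set.Ioi x), h x ≤ h y :=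
    (nhdsWithin_le_nhds) hmin
  have h2' : ∀ᶠ y in nhdsWithin x (Set.Ioi x), y ∈ Set.Ioo x (x + ρ/2) :=
    Ioo_mem_nhdsGT_of_mem ⟨le_refl x, by linarith⟩
  obtain ⟨y, hy1, hy2⟩ := (h1.and h2').exists
  have : h y < h x := hanti ⟨le_refl x, by linarith⟩ ⟨hy2.1.le, hy2.2.le⟩ hy2.1
  linarith

private lemma aux_not_isLocalMax_of_deriv2_pos {h : ℝ → ℝ} (hc : Continuous h)
    (hc' : Continuous (deriv h)) (hc'' : Continuous (deriv (deriv h)))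
    {x : ℝ} (h0 : deriv h x = 0) (h2 : 0 < deriv (deriv h) x) : ¬ IsLocalMax h x := by
  intro hmax
  have hU : IsOpen ((deriv (deriv h)) ⁻¹' Set.Ioi 0) := isOpen_Ioi.preimage hc''
  obtain ⟨ρ, ρpos, hball⟩ := Metric.isOpen_iff.1 hU x h2
  have mono : StrictMonoOn (deriv h) (Set.Icc (x - ρ/2) (x + ρ/2)) := by
    apply strictMonoOn_of_deriv_pos (convex_Icc _ _) hc'.continuousOn
    intro y hy
    rw [interior_Icc] at hy
    apply hball
    rw [Metric.mem_ball, Real.dist_eq, abs_sub_lt_iff]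
    constructor <;> [nlinarith [hy.1, hy.2]; nlinarith [hy.1, hy.2]]
  have hmono : StrictMonoOn h (Set.Icc x (x + ρ/2)) := by
    apply strictMonoOn_of_deriv_pos (convex_Icc _ _) hc.continuousOn
    intro y hy
    rw [interior_Icc] at hy
    have hyI : y ∈ Set.Icc (x - ρ/2) (x + ρ/2) := ⟨by linarith [hy.1], hy.2.le⟩
    have hxI : x ∈ Set.Icc (x - ρ/2) (x + ρ/2) := ⟨by linarith, by linarith⟩
    have := mono hxI hyI hy.1
    linarith [h0 ▸ this]
  have h1 : ∀ᶠ y in nhdsWithin x (Set.Ioi x), h y ≤ h x :=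
    (nhdsWithin_le_nhds) hmax
  have h2' : ∀ᶠ y in nhdsWithin x (Set.Ioi x), y ∈ Set.Ioo x (x + ρ/2) :=
    Ioo_mem_nhdsGT_of_mem ⟨le_refl x, by linarith⟩
  obtain ⟨y, hy1, hy2⟩ := (h1.and h2').exists
  have : h x < h y := hmono ⟨le_refl x, by linarith⟩ ⟨hy2.1.le, hy2.2.le⟩ hy2.1
  linarith

/-- small closed intervals around a point stay in an open set -/
private lemma aux_small_Icc {U : Set ℝ} (hU : IsOpen U) {c : ℝ} (hc : c ∈ U) :
    ∀ᶠ ε in nhdsWithin (0:ℝ) (Set.Ioi 0), Set.Icc (c - ε) (c + ε) ⊆ U := by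
  obtain ⟨ρ, ρpos, hball⟩ := Metric.isOpen_iff.1 hU c hc
  filter_upwards [Ioo_mem_nhdsGT_of_mem ⟨le_refl (0:ℝ), ρpos⟩] with ε hε x hx
  apply hball
  rw [Metric.mem_ball, Real.dist_eq, abs_sub_lt_iff]
  exact ⟨by linarith [hx.2, hε.2], by linarith [hx.1, hε.2]⟩

end AuxLemmas

/-- Localization of critical points of the estimators: if `f` is a `C³` probability density
with compact support `[a,b]`, positive on `(a,b)`, with finitely many nondegenerate critical
points, local minima `m₁, …, m_{r-1}` and local maxima `M₁, …, M_r` in `(a,b)`, `K ⊆ (a,b)`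
is compact and contains all critical points of `f` in its interior, and `gₙ` are `C²` with
`gₙ' → f'`, `gₙ'' → f''` uniformly, then there are `ε > 0` and `n₀` such that for `n ≥ n₀`:
(i) on each `[mⱼ - ε, mⱼ + ε]`, `gₙ'' > 0` and `gₙ` has exactly one critical point, a local
minimum; (ii) on each `[Mₖ - ε, Mₖ + ε]`, `gₙ'' < 0` and `gₙ` has exactly one critical point,
a local maximum; (iii) `gₙ` has no critical point in `K` outside these intervals. -/
theorem critical_points_of_estimators_localize
    (f : ℝ → ℝ) (hf : ContDiff ℝ 3 f)
    (a b : ℝ) (hab : a < b)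
    (hf_nonneg : ∀ x, 0 ≤ f x)
    (hf_int : ∫ x, f x = 1)
    (hf_supp : tsupport f = Set.Icc a b)
    (hf_pos : ∀ x ∈ Set.Ioo a b, 0 < f x)
    (hcrit_fin : {x | x ∈ Set.Ioo a b ∧ deriv f x = 0}.Finite)
    (hnondeg : ∀ x ∈ Set.Ioo a b, deriv f x = 0 → deriv (deriv f) x ≠ 0)
    (r : ℕ) (hr : 1 ≤ r)
    (m : Fin (r - 1) → ℝ) (hm_mono : StrictMono m)
    (hm_mem : ∀ j, m j ∈ Set.Ioo a b)
    (hm_min : {x | x ∈ Set.Ioo a b ∧ IsLocalMin f x} = Set.range m)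
    (M : Fin r → ℝ) (hM_mono : StrictMono M)
    (hM_mem : ∀ k, M k ∈ Set.Ioo a b)
    (hM_max : {x | x ∈ Set.Ioo a b ∧ IsLocalMax f x} = Set.range M)
    (K : Set ℝ) (hK : IsCompact K) (hK_sub : K ⊆ Set.Ioo a b)
    (hK_crit : {x | x ∈ Set.Ioo a b ∧ deriv f x = 0} ⊆ interior K)
    (g : ℕ → ℝ → ℝ) (hg : ∀ n, ContDiff ℝ 2 (g n))
    (hg1 : TendstoUniformly (fun n => deriv (g n)) (deriv f) atTop)
    (hg2 : TendstoUniformly (fun n => deriv (deriv (g n))) (deriv (deriv f)) atTop) :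
    ∃ ε > 0, ∃ n₀ : ℕ, ∀ n ≥ n₀,
      (∀ j : Fin (r - 1),
        (∀ x ∈ Set.Icc (m j - ε) (m j + ε), 0 < deriv (deriv (g n)) x) ∧
        (∃ x ∈ Set.Icc (m j - ε) (m j + ε), deriv (g n) x = 0 ∧ IsLocalMin (g n) x ∧
          ∀ y ∈ Set.Icc (m j - ε) (m j + ε), deriv (g n) y = 0 → y = x)) ∧
      (∀ k : Fin r,
        (∀ x ∈ Set.Icc (M k - ε) (M k + ε), deriv (deriv (g n)) x < 0) ∧
        (∃ x ∈ Set.Icc (M k - ε) (M k + ε), deriv (g n) x = 0 ∧ IsLocalMax (g n) x ∧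
          ∀ y ∈ Set.Icc (M k - ε) (M k + ε), deriv (g n) y = 0 → y = x)) ∧
      (∀ x ∈ K, (∀ j : Fin (r - 1), x ∉ Set.Icc (m j - ε) (m j + ε)) →
        (∀ k : Fin r, x ∉ Set.Icc (M k - ε) (M k + ε)) → deriv (g n) x ≠ 0) := by
  -- regularity facts
  have hf3 : ContDiff ℝ (2 + 1) f := by norm_num; exact hf
  have hfd : Differentiable ℝ f := hf.differentiable (by norm_num)
  have hf1 : ContDiff ℝ 2 (deriv f) := (contDiff_succ_iff_deriv.mp hf3).2.2
  have hf1c : Continuous (deriv f) := hf1.continuous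
  have hf12 : ContDiff ℝ (1 + 1) (deriv f) := by norm_num; exact hf1
  have hf2c : Continuous (deriv (deriv f)) :=
    (contDiff_succ_iff_deriv.mp hf12).2.2.continuous
  have hgd : ∀ n, Differentiable ℝ (g n) := fun n => (hg n).differentiable (by norm_num)
  have hg1c : ∀ n, Continuous (deriv (g n)) := fun n => (hg n).continuous_deriv (by norm_num)
  -- the `m j` and `M k` are nondegenerate critical points with the expected sign
  have hm_loc : ∀ j, IsLocalMin f (m j) := fun j => by
    have : m j ∈ {x | x ∈ Set.Ioo a b ∧ IsLocalMin f x} := hm_min ▸ Set.mem_range_self j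
    exact this.2
  have hM_loc : ∀ k, IsLocalMax f (M k) := fun k => by
    have : M k ∈ {x | x ∈ Set.Ioo a b ∧ IsLocalMax f x} := hM_max ▸ Set.mem_range_self k
    exact this.2
  have hm0 : ∀ j, deriv f (m j) = 0 := fun j => (hm_loc j).deriv_eq_zero
  have hM0 : ∀ k, deriv f (M k) = 0 := fun k => (hM_loc k).deriv_eq_zero
  have hm2 : ∀ j, 0 < deriv (deriv f) (m j) := by
    intro j
    rcases lt_or_gt_of_ne (hnondeg _ (hm_mem j) (hm0 j)) with h | h
    · exact absurd (hm_loc j)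
        (aux_not_isLocalMin_of_deriv2_neg hfd.continuous hf1c hf2c (hm0 j) h)
    · exact h
  have hM2 : ∀ k, deriv (deriv f) (M k) < 0 := by
    intro k
    rcases lt_or_gt_of_ne (hnondeg _ (hM_mem k) (hM0 k)) with h | h
    · exact h
    · exact absurd (hM_loc k)
        (aux_not_isLocalMax_of_deriv2_pos hfd.continuous hf1c hf2c (hM0 k) h)
  -- classification of critical points of f
  have hcrit_class : ∀ x ∈ Set.Ioo a b, deriv f x = 0 →
      (∃ j, m j = x) ∨ (∃ k, M k = x) := by
    intro x hx hx0
    rcases lt_or_gt_of_ne (hnondeg x hx hx0) with h | h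
    · right
      have hmax : IsLocalMax f x := aux_isLocalMax_of_deriv2_neg hfd hf1c hf2c hx0 h
      have : x ∈ Set.range M := hM_max ▸ (Set.mem_setOf.2 ⟨hx, hmax⟩)
      exact this
    · left
      have hmin : IsLocalMin f x := aux_isLocalMin_of_deriv2_pos hfd hf1c hf2c hx0 h
      have : x ∈ Set.range m := hm_min ▸ (Set.mem_setOf.2 ⟨hx, hmin⟩)
      exact this
  -- choose ε
  have hεev : ∀ᶠ ε in nhdsWithin (0:ℝ) (Set.Ioi 0),
      (∀ j, Set.Icc (m j - ε) (m j + ε) ⊆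
          Set.Ioo a b ∩ (deriv (deriv f)) ⁻¹' Set.Ioi 0) ∧
      (∀ k, Set.Icc (M k - ε) (M k + ε) ⊆
          Set.Ioo a b ∩ (deriv (deriv f)) ⁻¹' Set.Iio 0) := by
    refine Eventually.and ?_ ?_
    · rw [eventually_all]
      intro j
      exact aux_small_Icc (isOpen_Ioo.inter (isOpen_Ioi.preimage hf2c)) ⟨hm_mem j, hm2 j⟩
    · rw [eventually_all]
      intro k
      exact aux_small_Icc (isOpen_Ioo.inter (isOpen_Iio.preimage hf2c)) ⟨hM_mem k, hM2 k⟩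
  obtain ⟨ε, ⟨hεm, hεM⟩, hεpos⟩ :=
    (hεev.and (eventually_mem_nhdsWithin (s := Set.Ioi (0:ℝ)))).exists
  rw [Set.mem_Ioi] at hεpos
  -- f' is strictly monotone / antitone on the closed intervals, with signed endpoints
  have hmono : ∀ j, StrictMonoOn (deriv f) (Set.Icc (m j - ε) (m j + ε)) := fun j =>
    strictMonoOn_of_deriv_pos (convex_Icc _ _) hf1c.continuousOn
      (fun x hx => (hεm j (interior_subset hx)).2)
  have hanti : ∀ k, StrictAntiOn (deriv f) (Set.Icc (M k - ε) (M k + ε)) := fun k =>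
    strictAntiOn_of_deriv_neg (convex_Icc _ _) hf1c.continuousOn
      (fun x hx => (hεM k (interior_subset hx)).2)
  have hmmem : ∀ j, m j ∈ Set.Icc (m j - ε) (m j + ε) := fun j => ⟨by linarith, by linarith⟩
  have hMmem : ∀ k, M k ∈ Set.Icc (M k - ε) (M k + ε) := fun k => ⟨by linarith, by linarith⟩
  have hfu : ∀ j, deriv f (m j - ε) < 0 := by
    intro j
    have h := hmono j ⟨le_refl _, by linarith⟩ (hmmem j) (by linarith)
    rw [hm0 j] at h; exact h
  have hfv : ∀ j, 0 < deriv f (m j + ε) := by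
    intro j
    have h := hmono j (hmmem j) ⟨by linarith, le_refl _⟩ (by linarith)
    rw [hm0 j] at h; exact h
  have hFu : ∀ k, 0 < deriv f (M k - ε) := by
    intro k
    have h := hanti k ⟨le_refl _, by linarith⟩ (hMmem k) (by linarith)
    rw [hM0 k] at h; exact h
  have hFv : ∀ k, deriv f (M k + ε) < 0 := by
    intro k
    have h := hanti k (hMmem k) ⟨by linarith, le_refl _⟩ (by linarith)
    rw [hM0 k] at h; exact h
  rw [Metric.tendstoUniformly_iff] at hg1 hg2
  -- eventual statements for the minima
  have Em : ∀ j, ∀ᶠ n in atTop,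
      (∀ x ∈ Set.Icc (m j - ε) (m j + ε), 0 < deriv (deriv (g n)) x) ∧
      deriv (g n) (m j - ε) < 0 ∧ 0 < deriv (g n) (m j + ε) := by
    intro j
    obtain ⟨z, hz, hzmin⟩ := isCompact_Icc.exists_isMinOn ⟨m j, hmmem j⟩ hf2c.continuousOn
    have hδ : 0 < deriv (deriv f) z := (hεm j hz).2
    filter_upwards [hg2 _ hδ, hg1 _ (neg_pos.2 (hfu j)), hg1 _ (hfv j)] with n hn hnu hnv
    refine ⟨fun x hx => ?_, ?_, ?_⟩
    · have h1 := hn x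
      rw [Real.dist_eq, abs_sub_lt_iff] at h1
      have h2 := hzmin hx
      simp only [Set.mem_setOf_eq] at h2
      linarith [h1.1]
    · have h1 := hnu (m j - ε)
      rw [Real.dist_eq, abs_sub_lt_iff] at h1
      linarith [h1.2]
    · have h1 := hnv (m j + ε)
      rw [Real.dist_eq, abs_sub_lt_iff] at h1
      linarith [h1.1]
  -- eventual statements for the maxima
  have EM : ∀ k, ∀ᶠ n in atTop,
      (∀ x ∈ Set.Icc (M k - ε) (M k + ε), deriv (deriv (g n)) x < 0) ∧
      0 < deriv (g n) (M k - ε) ∧ deriv (g n) (M k + ε) < 0 := by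
    intro k
    obtain ⟨z, hz, hzmax⟩ := isCompact_Icc.exists_isMaxOn ⟨M k, hMmem k⟩ hf2c.continuousOn
    have hδ : deriv (deriv f) z < 0 := (hεM k hz).2
    filter_upwards [hg2 _ (neg_pos.2 hδ), hg1 _ (hFu k), hg1 _ (neg_pos.2 (hFv k))]
      with n hn hnu hnv
    refine ⟨fun x hx => ?_, ?_, ?_⟩
    · have h1 := hn x
      rw [Real.dist_eq, abs_sub_lt_iff] at h1
      have h2 := hzmax hx
      simp only [Set.mem_setOf_eq] at h2
      linarith [h1.2]
    · have h1 := hnu (M k - ε)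
      rw [Real.dist_eq, abs_sub_lt_iff] at h1
      linarith [h1.1]
    · have h1 := hnv (M k + ε)
      rw [Real.dist_eq, abs_sub_lt_iff] at h1
      linarith [h1.2]
  -- eventual statement outside the intervals
  set K'' : Set ℝ := (K \ ⋃ j, Set.Ioo (m j - ε) (m j + ε)) \
      ⋃ k, Set.Ioo (M k - ε) (M k + ε) with hK''def
  have hK''cpt : IsCompact K'' :=
    (hK.diff (isOpen_iUnion fun j => isOpen_Ioo)).diff (isOpen_iUnion fun k => isOpen_Ioo)
  have hK''ne : ∀ x ∈ K'', deriv f x ≠ 0 := by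
    intro x hx hx0
    rcases hcrit_class x (hK_sub hx.1.1) hx0 with ⟨j, hj⟩ | ⟨k, hk⟩
    · exact hx.1.2 (Set.mem_iUnion.2 ⟨j, by rw [hj]; exact ⟨by linarith, by linarith⟩⟩)
    · exact hx.2 (Set.mem_iUnion.2 ⟨k, by rw [hk]; exact ⟨by linarith, by linarith⟩⟩)
  have E4 : ∀ᶠ n in atTop, ∀ x ∈ K'', deriv (g n) x ≠ 0 := by
    rcases K''.eq_empty_or_nonempty with he | hne
    · filter_upwards with n x hx
      rw [he] at hx
      exact absurd hx (Set.notMem_empty x)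
    · obtain ⟨z, hz, hzmin⟩ :=
        hK''cpt.exists_isMinOn hne ((continuous_abs.comp hf1c).continuousOn)
      have hη : 0 < |deriv f z| := abs_pos.2 (hK''ne z hz)
      filter_upwards [hg1 _ hη] with n hn x hx hx0
      have h1 := hn x
      rw [Real.dist_eq, hx0, sub_zero] at h1
      have h2 := hzmin hx
      simp only [Function.comp_apply, Set.mem_setOf_eq] at h2
      exact absurd h2 (not_le.2 h1)
  -- put everything together
  have hall := ((eventually_all.2 Em).and ((eventually_all.2 EM).and E4))
  rw [eventually_atTop] at hall
  obtain ⟨n₀, hn₀⟩ := hall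
  refine ⟨ε, hεpos, n₀, fun n hn => ?_⟩
  obtain ⟨h1, h2, h3⟩ := hn₀ n hn
  refine ⟨fun j => ?_, fun k => ?_, fun x hxK hxm hxM => ?_⟩
  · obtain ⟨hpos, hu, hv⟩ := h1 j
    exact ⟨hpos, aux_key_min (hgd n) (hg1c n) (by linarith) hpos hu hv⟩
  · obtain ⟨hneg, hu, hv⟩ := h2 k
    exact ⟨hneg, aux_key_max (hgd n) (hg1c n) (by linarith) hneg hu hv⟩
  · refine h3 x ⟨⟨hxK, fun hmem => ?_⟩, fun hmem => ?_⟩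
    · obtain ⟨j, hj⟩ := Set.mem_iUnion.1 hmem
      exact hxm j ⟨hj.1.le, hj.2.le⟩
    · obtain ⟨k, hk⟩ := Set.mem_iUnion.1 hmem
      exact hxM k ⟨hk.1.le, hk.2.le⟩
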